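/- Let S(ℂ[∂]⊗g) carry the PVA λ-bracket determined by {a_λ b} = [a,b] + λk(a,b) for a,b ∈ g (extended by sesquilinearity and Leibniz rules), and let J ⊂ S(ℂ[∂]⊗g) be the differential algebra ideal generated by {m − (f,m) : m ∈ 𝔪}. Then the λ-adjoint action of n defined by (ad_λ n)(a+J) = {n_λ a} + J[λ] is well defined on S(ℂ[∂]⊗g)/J, and on the invariant subspace W₂(g,k,f) := (S(ℂ[∂]⊗g)/J)^{ad_λ n} both the multiplication (a+J)·(b+J) = ab+J and the Poisson λ-bracket {a+J _λ b+J} = {a_λ b} + J[λ] are well defined. -/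

import Mathlib

/-!
STATEMENT 1.  Let `S(ℂ[∂]⊗g)` carry the PVA `λ`-bracket determined by
`{a_λ b} = [a,b] + λ k (a,b)` for `a, b ∈ g`, and let `J` be the differential algebra
ideal generated by `{m − (f,m) : m ∈ 𝔪}`.  Then the `λ`-adjoint action of `n`,
`(ad_λ n)(a+J) = {n_λ a} + J[λ]`, is well defined on `S(ℂ[∂]⊗g)/J`, and on the invariant
subspace `W₂(g,k,f) = (S(ℂ[∂]⊗g)/J)^{ad_λ n}` the multiplication and the Poisson
`λ`-bracket are well defined.

We model `S(ℂ[∂]⊗g)` as an abstract differential commutative `ℂ`-algebra `V` with a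
`λ`-bracket (values in `V[λ] = Polynomial V`) satisfying the PVA axioms, together with an
embedding `emb : g →ₗ[ℂ] V` of the generators on which the bracket takes the prescribed
values.  `g(i)` is the `ad(h/2)`-eigenspace, `n = ⊕_{i≥1/2} g(i)`, `𝔪 = ⊕_{i≥1} g(i)`.
Working with representatives, well-definedness of the structure maps on
`W₂ = (V/J)^{ad_λ n}` is expressed coefficientwise modulo `J`.
-/

open Polynomial

noncomputable section

namespace Stmt1
set_option linter.unusedSectionVars false

/-- Apply `D` to every coefficient of `p ∈ V[λ]`. -/
def coeffMap {V : Type*} [CommRing V] (D : V → V) (p : Polynomial V) : Polynomial V :=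
  p.sum fun n c => Polynomial.C (D c) * Polynomial.X ^ n

/-- The operator `(λ + ∂)` on `V[λ]`. -/
def shiftOp {V : Type*} [CommRing V] (D : V → V) (q : Polynomial V) : Polynomial V :=
  Polynomial.X * q + coeffMap D q

/-- `{a_{-λ-∂} b}` : substitute `-λ-∂` for `λ` (with `∂` acting on the coefficients). -/
def negShiftEval {V : Type*} [CommRing V] (D : V → V) (p : Polynomial V) : Polynomial V :=
  p.sum fun n c => (fun q => -shiftOp D q)^[n] (Polynomial.C c)

def lamPP {V : Type*} [CommRing V] : Polynomial (Polynomial V) := Polynomial.C Polynomial.X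
def muPP {V : Type*} [CommRing V] : Polynomial (Polynomial V) := Polynomial.X
def embPP {V : Type*} [CommRing V] (c : V) : Polynomial (Polynomial V) :=
  Polynomial.C (Polynomial.C c)

/-- Evaluate `q ∈ V[ν]` at `ν = t` inside `V[λ][μ]`. -/
def evalAtPP {V : Type*} [CommRing V] (q : Polynomial V) (t : Polynomial (Polynomial V)) :
    Polynomial (Polynomial V) :=
  q.sum fun n c => embPP c * t ^ n

/-- Poisson vertex algebra axioms for a differential commutative algebra `(V, D)` with a
`λ`-bracket `br : V → V → V[λ]`.  In the Jacobi identity, `V[λ,μ]` is modelled as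
`Polynomial (Polynomial V)` with `μ` the outer and `λ` the inner variable. -/
structure IsPVA {V : Type*} [CommRing V] [Algebra ℂ V] (D : V → V)
    (br : V → V → Polynomial V) : Prop where
  d_add : ∀ a b, D (a + b) = D a + D b
  d_smul : ∀ (r : ℂ) (a), D (r • a) = r • D a
  d_mul : ∀ a b, D (a * b) = a * D b + D a * b
  add_left : ∀ a b c, br (a + b) c = br a c + br b c
  add_right : ∀ a b c, br a (b + c) = br a b + br a c
  smul_left : ∀ (r : ℂ) a b, br (r • a) b = r • br a b
  smul_right : ∀ (r : ℂ) a b, br a (r • b) = r • br a b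
  sesq_left : ∀ a b, br (D a) b = -(Polynomial.X * br a b)
  sesq_right : ∀ a b, br a (D b) = shiftOp D (br a b)
  skew : ∀ a b, br b a = -negShiftEval D (br a b)
  jacobi : ∀ a b c,
    ((br b c).sum fun n x => Polynomial.C (br a x) * Polynomial.X ^ n) =
      ((br a c).sum fun m x => (br b x).sum fun n y =>
        (Polynomial.X : Polynomial (Polynomial V)) ^ n *
          Polynomial.C ((Polynomial.X : Polynomial V) ^ m * Polynomial.C y)) +
      ((br a b).sum fun n x => lamPP ^ n * evalAtPP (br x c) (lamPP + muPP))
  leibniz : ∀ a b c, br a (b * c) = Polynomial.C b * br a c + br a b * Polynomial.C c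

/-- `g(i)`, the `ad(h/2)`-eigenspace of eigenvalue `i` (i.e. the `ad h`-eigenspace of
eigenvalue `2 i`). -/
def gsp (g : Type*) [LieRing g] [LieAlgebra ℂ g] (h : g) (i : ℚ) : Submodule ℂ g :=
  Module.End.eigenspace (LieAlgebra.ad ℂ g h) ((2 * i : ℚ) : ℂ)

/-- `n = ⊕_{i ≥ 1/2} g(i)`. -/
def nilp (g : Type*) [LieRing g] [LieAlgebra ℂ g] (h : g) : Submodule ℂ g :=
  ⨆ (i : ℚ) (_ : (1:ℚ)/2 ≤ i), gsp g h i

/-- `𝔪 = ⊕_{i ≥ 1} g(i)`. -/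
def mmp (g : Type*) [LieRing g] [LieAlgebra ℂ g] (h : g) : Submodule ℂ g :=
  ⨆ (i : ℚ) (_ : (1:ℚ) ≤ i), gsp g h i

/-- The differential algebra ideal generated by a set: the ideal generated by all
`∂`-derivatives of its elements. -/
def diffIdealGen {V : Type*} [CommRing V] (D : V → V) (s : Set V) : Ideal V :=
  Ideal.span {v | ∃ x ∈ s, ∃ n : ℕ, v = D^[n] x}


/-! ### Auxiliary lemmas -/

section PolyIdeal

variable {V : Type*} [CommRing V] [Algebra ℂ V] {J : Ideal V}

/-- All coefficients of `p` lie in `J`. -/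
def PJ (J : Ideal V) (p : Polynomial V) : Prop := ∀ i, p.coeff i ∈ J

/-- All (double) coefficients of `p` lie in `J`. -/
def QJ (J : Ideal V) (p : Polynomial (Polynomial V)) : Prop := ∀ i j, ((p.coeff i).coeff j) ∈ J

lemma PJ.zero : PJ J 0 := fun i => by simp

lemma PJ.add {p q} (hp : PJ J p) (hq : PJ J q) : PJ J (p + q) := fun i => by
  rw [Polynomial.coeff_add]; exact J.add_mem (hp i) (hq i)

lemma PJ.neg {p} (hp : PJ J p) : PJ J (-p) := fun i => by
  rw [Polynomial.coeff_neg]; exact neg_mem (hp i)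

lemma PJ.mulRight {p} (hp : PJ J p) (q) : PJ J (q * p) := fun i => by
  rw [Polynomial.coeff_mul]
  exact Ideal.sum_mem _ fun x _ => J.mul_mem_left _ (hp x.2)

lemma PJ.mulLeft {p} (hp : PJ J p) (q) : PJ J (p * q) := fun i => by
  rw [Polynomial.coeff_mul]
  exact Ideal.sum_mem _ fun x _ => J.mul_mem_right _ (hp x.1)

lemma PJ.C {c} (hc : c ∈ J) : PJ J (Polynomial.C c) := fun i => by
  rw [Polynomial.coeff_C]; split <;> simp [hc]

lemma PJ.finsetSum {ι : Type*} (s : Finset ι) (f : ι → Polynomial V)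
    (hf : ∀ x ∈ s, PJ J (f x)) : PJ J (∑ x ∈ s, f x) := fun i => by
  rw [Polynomial.finset_sum_coeff]
  exact Ideal.sum_mem _ fun x hx => hf x hx i

lemma PJ.polySum (p : Polynomial V) (f : ℕ → V → Polynomial V)
    (hf : ∀ n ∈ p.support, PJ J (f n (p.coeff n))) : PJ J (p.sum f) := by
  rw [Polynomial.sum_def]; exact PJ.finsetSum _ _ hf

lemma QJ.add {p q} (hp : QJ J p) (hq : QJ J q) : QJ J (p + q) := fun i j => by
  rw [Polynomial.coeff_add, Polynomial.coeff_add]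
  exact J.add_mem (hp i j) (hq i j)

lemma QJ.mulRight {p} (hp : QJ J p) (q) : QJ J (q * p) := fun i j => by
  rw [Polynomial.coeff_mul, Polynomial.finset_sum_coeff]
  refine Ideal.sum_mem _ fun x _ => ?_
  rw [Polynomial.coeff_mul]
  exact Ideal.sum_mem _ fun y _ => J.mul_mem_left _ (hp _ _)

lemma QJ.mulLeft {p} (hp : QJ J p) (q) : QJ J (p * q) := fun i j => by
  rw [Polynomial.coeff_mul, Polynomial.finset_sum_coeff]
  refine Ideal.sum_mem _ fun x _ => ?_
  rw [Polynomial.coeff_mul]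
  exact Ideal.sum_mem _ fun y _ => J.mul_mem_right _ (hp _ _)

lemma QJ.CP {q : Polynomial V} (hq : PJ J q) : QJ J (Polynomial.C q) := fun i j => by
  rw [Polynomial.coeff_C]
  split
  · exact hq j
  · simp

lemma QJ.embPP {c : V} (hc : c ∈ J) : QJ J (embPP c) := QJ.CP (PJ.C hc)

lemma QJ.finsetSum {ι : Type*} (s : Finset ι) (f : ι → Polynomial (Polynomial V))
    (hf : ∀ x ∈ s, QJ J (f x)) : QJ J (∑ x ∈ s, f x) := fun i j => by
  rw [Polynomial.finset_sum_coeff, Polynomial.finset_sum_coeff]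
  exact Ideal.sum_mem _ fun x hx => hf x hx i j

lemma QJ.polySum (p : Polynomial V) (f : ℕ → V → Polynomial (Polynomial V))
    (hf : ∀ n ∈ p.support, QJ J (f n (p.coeff n))) : QJ J (p.sum f) := by
  rw [Polynomial.sum_def]; exact QJ.finsetSum _ _ hf

end PolyIdeal

section PVAfacts

variable {V : Type*} [CommRing V] [Algebra ℂ V] {D : V → V} {br : V → V → Polynomial V}

lemma IsPVA.D_zero (hP : IsPVA D br) : D 0 = 0 := by
  have h := hP.d_add 0 0
  rw [add_zero] at h
  exact left_eq_add.mp h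

lemma IsPVA.br_zero_right (hP : IsPVA D br) (a : V) : br a 0 = 0 := by
  have h := hP.add_right a 0 0
  rw [add_zero] at h
  exact left_eq_add.mp h

lemma IsPVA.br_zero_left (hP : IsPVA D br) (a : V) : br 0 a = 0 := by
  have h := hP.add_left 0 0 a
  rw [add_zero] at h
  exact left_eq_add.mp h

lemma IsPVA.br_neg_right (hP : IsPVA D br) (a b : V) : br a (-b) = -br a b := by
  have h := hP.add_right a b (-b)
  rw [add_neg_cancel, hP.br_zero_right] at h
  exact (eq_neg_of_add_eq_zero_right h.symm)

lemma IsPVA.br_neg_left (hP : IsPVA D br) (a b : V) : br (-a) b = -br a b := by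
  have h := hP.add_left a (-a) b
  rw [add_neg_cancel, hP.br_zero_left] at h
  exact (eq_neg_of_add_eq_zero_right h.symm)

lemma IsPVA.br_sub_right (hP : IsPVA D br) (a b c : V) : br a (b - c) = br a b - br a c := by
  rw [sub_eq_add_neg, hP.add_right, hP.br_neg_right, sub_eq_add_neg]

lemma IsPVA.br_sub_left (hP : IsPVA D br) (a b c : V) : br (a - b) c = br a c - br b c := by
  rw [sub_eq_add_neg, hP.add_left, hP.br_neg_left, sub_eq_add_neg]

lemma IsPVA.br_one_right (hP : IsPVA D br) (a : V) : br a 1 = 0 := by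
  have h := hP.leibniz a 1 1
  rw [mul_one, Polynomial.C_1, one_mul, mul_one] at h
  exact left_eq_add.mp h

lemma IsPVA.br_algebraMap_right (hP : IsPVA D br) (a : V) (r : ℂ) :
    br a (algebraMap ℂ V r) = 0 := by
  rw [Algebra.algebraMap_eq_smul_one, hP.smul_right, hP.br_one_right, smul_zero]

variable {J : Ideal V}

lemma PJ.coeffMap (hD : ∀ v ∈ J, D v ∈ J) {p} (hp : PJ J p) : PJ J (Stmt1.coeffMap D p) :=
  PJ.polySum _ _ fun n _ => (PJ.C (hD _ (hp n))).mulLeft _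

lemma PJ.shiftOp (hD : ∀ v ∈ J, D v ∈ J) {p} (hp : PJ J p) : PJ J (Stmt1.shiftOp D p) :=
  (hp.mulRight _).add (hp.coeffMap hD)

lemma PJ.negShiftIter (hD : ∀ v ∈ J, D v ∈ J) (n : ℕ) {q} (hq : PJ J q) :
    PJ J ((fun q => -Stmt1.shiftOp D q)^[n] q) := by
  induction n with
  | zero => exact hq
  | succ n ih => rw [Function.iterate_succ_apply']; exact (ih.shiftOp hD).neg

lemma PJ.negShiftEval (hD : ∀ v ∈ J, D v ∈ J) {p} (hp : PJ J p) :
    PJ J (Stmt1.negShiftEval D p) :=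
  PJ.polySum _ _ fun n hn => PJ.negShiftIter hD n (PJ.C (hp n))

lemma diffIdealGen_D_stable (hP : IsPVA D br) (s : Set V) :
    ∀ v ∈ diffIdealGen D s, D v ∈ diffIdealGen D s := by
  intro v hv
  refine Submodule.span_induction (p := fun v _ => D v ∈ diffIdealGen D s) ?_ ?_ ?_ ?_ hv
  · rintro x ⟨y, hy, n, rfl⟩
    exact Ideal.subset_span ⟨y, hy, n + 1, (Function.iterate_succ_apply' D n y).symm⟩
  · show D 0 ∈ diffIdealGen D s
    rw [hP.D_zero]; exact zero_mem _
  · intro x y _ _ hx hy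
    show D (x + y) ∈ diffIdealGen D s
    rw [hP.d_add]; exact add_mem hx hy
  · intro c x hxJ hx
    show D (c • x) ∈ diffIdealGen D s
    rw [smul_eq_mul, hP.d_mul]
    exact add_mem (Ideal.mul_mem_left _ _ hx) (Ideal.mul_mem_left _ _ hxJ)

lemma PJ_br_span {s : Set V} (hP : IsPVA D br) {J : Ideal V} (hJ : J = diffIdealGen D s)
    (a : V) (hbase : ∀ x ∈ s, PJ J (br a x)) : ∀ v ∈ J, PJ J (br a v) := by
  have hD : ∀ v ∈ J, D v ∈ J := by
    rw [hJ]; exact diffIdealGen_D_stable hP s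
  intro v hv
  rw [hJ] at hv
  refine Submodule.span_induction (p := fun v _ => PJ J (br a v)) ?_ ?_ ?_ ?_ hv
  · rintro x ⟨y, hy, n, rfl⟩
    show PJ J (br a (D^[n] y))
    induction n with
    | zero => exact hbase y hy
    | succ n ih =>
      rw [Function.iterate_succ_apply', hP.sesq_right]
      exact ih.shiftOp hD
  · show PJ J (br a 0)
    rw [hP.br_zero_right]; exact PJ.zero
  · intro x y _ _ hx hy
    show PJ J (br a (x + y))
    rw [hP.add_right]; exact hx.add hy
  · intro c x hxJ hx
    show PJ J (br a (c • x))
    rw [smul_eq_mul, hP.leibniz]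
    exact (hx.mulRight _).add ((PJ.C (hJ ▸ hxJ)).mulRight _)

lemma sum_C_mul_X_pow_coeff {W : Type*} [CommRing W] (p : Polynomial V)
    (F : V → W) (hF : F 0 = 0) (i : ℕ) :
    ((p.sum fun n x => Polynomial.C (F x) * Polynomial.X ^ n).coeff i) = F (p.coeff i) := by
  rw [Polynomial.sum_def, Polynomial.finset_sum_coeff]
  simp only [Polynomial.coeff_C_mul, Polynomial.coeff_X_pow, mul_ite, mul_one, mul_zero]
  rw [Finset.sum_ite_eq p.support i fun n => F (p.coeff n)]
  split
  · rfl
  · next hmem => rw [Polynomial.notMem_support_iff.mp hmem, hF]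

end PVAfacts

section LieFacts

variable {g : Type*} [LieRing g] [LieAlgebra ℂ g] {h : g}

lemma mem_gsp {i : ℚ} {x : g} : x ∈ gsp g h i ↔ ⁅h, x⁆ = ((2 * i : ℚ) : ℂ) • x := by
  rw [gsp, Module.End.mem_eigenspace_iff, LieAlgebra.ad_apply]

lemma lie_mem_gsp {i j : ℚ} {x y : g} (hx : x ∈ gsp g h i) (hy : y ∈ gsp g h j) :
    ⁅x, y⁆ ∈ gsp g h (i + j) := by
  rw [mem_gsp] at hx hy ⊢
  rw [leibniz_lie, hx, hy, smul_lie, lie_smul, ← add_smul]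
  congr 1
  push_cast
  ring

lemma B_gsp_zero {B : g →ₗ[ℂ] g →ₗ[ℂ] ℂ}
    (hBsymm : ∀ a b, B a b = B b a) (hBinv : ∀ a b c, B ⁅a, b⁆ c = B a ⁅b, c⁆)
    {i j : ℚ} {x y : g} (hx : x ∈ gsp g h i) (hy : y ∈ gsp g h j) (hij : i + j ≠ 0) :
    B x y = 0 := by
  rw [mem_gsp] at hx hy
  have h2 : B x ⁅h, y⁆ = -B ⁅x, y⁆ h := by
    rw [← lie_skew h y, map_neg, ← hBinv x y h]
  have e1 : B ⁅h, x⁆ y + B x ⁅h, y⁆ = 0 := by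
    rw [hBinv h x y, h2, hBsymm h ⁅x, y⁆]
    ring
  rw [hx, hy] at e1
  simp only [map_smul, LinearMap.smul_apply, smul_eq_mul] at e1
  rw [← add_mul] at e1
  have hne : ((2 * i : ℚ) : ℂ) + ((2 * j : ℚ) : ℂ) ≠ 0 := by
    have : (2 * i + 2 * j : ℚ) ≠ 0 := by
      intro hc; apply hij; linarith
    push_cast
    have h' : ((2 * i + 2 * j : ℚ) : ℂ) ≠ 0 := Rat.cast_ne_zero.mpr this
    push_cast at h'
    exact h'
  exact (mul_eq_zero.mp e1).resolve_left hne

lemma biSup_induction (c : ℚ) {motive : g → Prop} {x : g}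
    (hx : x ∈ ⨆ (i : ℚ) (_ : c ≤ i), gsp g h i)
    (mem : ∀ i, c ≤ i → ∀ y ∈ gsp g h i, motive y)
    (h0 : motive 0) (hadd : ∀ y z, motive y → motive z → motive (y + z)) : motive x := by
  refine Submodule.iSup_induction (motive := motive) (fun i => ⨆ (_ : c ≤ i), gsp g h i) hx
    (fun i y hy => ?_) h0 hadd
  have hy' : y ∈ ⨆ (_ : c ≤ i), gsp g h i := hy
  by_cases hc : c ≤ i
  · rw [iSup_pos hc] at hy'
    exact mem i hc y hy'
  · rw [iSup_neg hc] at hy'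
    rw [Submodule.mem_bot] at hy'
    rw [hy']
    exact h0

lemma mem_mmp_of {i : ℚ} (hi : 1 ≤ i) {x : g} (hx : x ∈ gsp g h i) : x ∈ mmp g h :=
  Submodule.mem_iSup_of_mem i (by rw [iSup_pos hi]; exact hx)

lemma mmp_le_nilp : mmp g h ≤ nilp g h := by
  refine iSup₂_le fun i hi => ?_
  exact le_iSup₂ (f := fun (i : ℚ) (_ : (1:ℚ)/2 ≤ i) => gsp g h i) i (by linarith)

lemma key_facts {B : g →ₗ[ℂ] g →ₗ[ℂ] ℂ}
    (hBsymm : ∀ a b, B a b = B b a) (hBinv : ∀ a b c, B ⁅a, b⁆ c = B a ⁅b, c⁆)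
    {f : g} (hf : f ∈ gsp g h (-1)) :
    ∀ nn ∈ nilp g h, ∀ m ∈ mmp g h,
      B nn m = 0 ∧ B f ⁅nn, m⁆ = 0 ∧ ⁅nn, m⁆ ∈ mmp g h := by
  intro nn hnn
  refine biSup_induction (motive := fun nn => ∀ m ∈ mmp g h,
      B nn m = 0 ∧ B f ⁅nn, m⁆ = 0 ∧ ⁅nn, m⁆ ∈ mmp g h)
    ((1:ℚ)/2) hnn (fun i hi x hx => ?_)
    (fun m _ => ⟨by simp, by simp, by simp [zero_mem]⟩)
    (fun y z hy hz m hm => ?_)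
  · intro m hm
    refine biSup_induction (motive := fun m =>
        B x m = 0 ∧ B f ⁅x, m⁆ = 0 ∧ ⁅x, m⁆ ∈ mmp g h)
      (1:ℚ) hm (fun j hj y hy => ?_)
      (⟨by simp, by simp, by simp [zero_mem]⟩)
      (fun y z hy hz => ?_)
    · refine ⟨B_gsp_zero hBsymm hBinv hx hy (by linarith),
        B_gsp_zero hBsymm hBinv hf (lie_mem_gsp hx hy) (by intro hc; linarith),
        mem_mmp_of (by linarith) (lie_mem_gsp hx hy)⟩
    · obtain ⟨h1, h2, h3⟩ := hy
      obtain ⟨g1, g2, g3⟩ := hz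
      refine ⟨?_, ?_, ?_⟩
      · rw [map_add, h1, g1, add_zero]
      · rw [lie_add, map_add, h2, g2, add_zero]
      · rw [lie_add]; exact add_mem h3 g3
  · obtain ⟨h1, h2, h3⟩ := hy m hm
    obtain ⟨g1, g2, g3⟩ := hz m hm
    refine ⟨?_, ?_, ?_⟩
    · rw [map_add, LinearMap.add_apply, h1, g1, add_zero]
    · rw [add_lie, map_add, h2, g2, add_zero]
    · rw [add_lie]; exact add_mem h3 g3

end LieFacts

theorem statement1
    -- a finite-dimensional simple Lie algebra with an sl₂-triple (e,h,f) and a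
    -- normalized invariant symmetric bilinear form
    (g : Type*) [LieRing g] [LieAlgebra ℂ g] [FiniteDimensional ℂ g] [LieAlgebra.IsSimple ℂ g]
    (e h f : g) (B : g →ₗ[ℂ] g →ₗ[ℂ] ℂ)
    (hhe : ⁅h, e⁆ = (2:ℂ) • e) (hhf : ⁅h, f⁆ = (-2:ℂ) • f) (hef : ⁅e, f⁆ = h)
    (hBsymm : ∀ a b, B a b = B b a) (hBinv : ∀ a b c, B ⁅a, b⁆ c = B a ⁅b, c⁆)
    (hBef : B e f = 1) (hBhh : B h h = 2)
    (k : ℂ)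
    -- V = S(ℂ[∂]⊗g), an algebra of differential polynomials generated by g
    (V : Type*) [CommRing V] [Algebra ℂ V] (D : V → V)
    (br : V → V → Polynomial V)
    (hPVA : IsPVA D br)
    (emb : g →ₗ[ℂ] V)
    -- the λ-bracket is determined on the generators by {a_λ b} = [a,b] + λ k (a,b)
    (hbr_gen : ∀ a b : g,
      br (emb a) (emb b) = Polynomial.C (emb ⁅a, b⁆) + (k * B a b) • (Polynomial.X : Polynomial V))
    -- V is freely generated, as a differential algebra, by (the image of) a basis of g
    (ib : Type*) (bg : Module.Basis ib ℂ g)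
    (hfree : AlgebraicIndependent ℂ (fun p : ib × ℕ => D^[p.2] (emb (bg p.1))) ∧
      Algebra.adjoin ℂ (Set.range fun p : ib × ℕ => D^[p.2] (emb (bg p.1))) = ⊤) :
    -- J = ⟨ m − (f,m) : m ∈ 𝔪 ⟩ (differential algebra ideal)
    ∀ J : Ideal V, J = diffIdealGen D {v | ∃ x ∈ mmp g h, v = emb x - algebraMap ℂ V (B f x)} →
    -- (1) the λ-adjoint action of n is well defined on V/J: (ad_λ n)(J) ⊆ J[λ]
    ((∀ nn ∈ nilp g h, ∀ v ∈ J, ∀ i : ℕ, (br (emb nn) v).coeff i ∈ J) ∧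
    -- (2) on W₂ = (V/J)^{ad_λ n}, described by invariant representatives `Inv`,
    -- the multiplication and the λ-bracket are well defined
    (∀ Inv : V → Prop, (∀ a, Inv a ↔ ∀ nn ∈ nilp g h, ∀ i : ℕ, (br (emb nn) a).coeff i ∈ J) →
      -- invariance passes to J-equivalent representatives
      (∀ a b, Inv a → a - b ∈ J → Inv b) ∧
      -- the product of invariant elements is invariant (well-definedness mod J is
      -- automatic for an ideal), so multiplication is well defined on W₂
      (Inv 1 ∧ (∀ a b, Inv a → Inv b → Inv (a * b)) ∧ (∀ a b, Inv a → Inv b → Inv (a + b))) ∧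
      -- the λ-bracket descends: its coefficients are invariant mod J and do not depend on
      -- the choice of representatives
      ((∀ a b, Inv a → Inv b → ∀ i : ℕ, Inv ((br a b).coeff i)) ∧
       (∀ a a' b b', Inv a → Inv b → a - a' ∈ J → b - b' ∈ J →
          ∀ i : ℕ, (br a b).coeff i - (br a' b').coeff i ∈ J)))) := by
  intro J hJ
  have hfgsp : f ∈ gsp g h (-1) := by
    rw [mem_gsp, hhf]
    norm_num
  have hkey := key_facts (h := h) hBsymm hBinv hfgsp
  have hD : ∀ v ∈ J, D v ∈ J := by
    rw [hJ]; exact diffIdealGen_D_stable hPVA _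
  have hmemJ : ∀ x ∈ {v | ∃ x ∈ mmp g h, v = emb x - algebraMap ℂ V (B f x)}, x ∈ J := by
    intro x hx
    rw [hJ]
    exact Ideal.subset_span ⟨x, hx, 0, rfl⟩
  have hembJ : ∀ m ∈ mmp g h, B f m = 0 → emb m ∈ J := by
    intro m hm hB
    have hrw : emb m = emb m - algebraMap ℂ V (B f m) := by rw [hB, map_zero, sub_zero]
    rw [hrw]
    exact hmemJ _ ⟨m, hm, rfl⟩
  have claim1 : ∀ nn ∈ nilp g h, ∀ v ∈ J, PJ J (br (emb nn) v) := by
    intro nn hnn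
    refine PJ_br_span hPVA hJ (emb nn) ?_
    rintro x ⟨m, hm, rfl⟩
    obtain ⟨hB0, hBf, hmm⟩ := hkey nn hnn m hm
    have heq : br (emb nn) (emb m - algebraMap ℂ V (B f m)) = Polynomial.C (emb ⁅nn, m⁆) := by
      rw [hPVA.br_sub_right, hPVA.br_algebraMap_right, sub_zero, hbr_gen, hB0, mul_zero,
        zero_smul, add_zero]
    rw [heq]
    exact PJ.C (hembJ _ hmm hBf)
  have claimC : ∀ a : V, (∀ nn ∈ nilp g h, PJ J (br (emb nn) a)) → ∀ v ∈ J, PJ J (br a v) := by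
    intro a ha
    refine PJ_br_span hPVA hJ a ?_
    rintro x ⟨m, hm, rfl⟩
    rw [hPVA.br_sub_right, hPVA.br_algebraMap_right, sub_zero, hPVA.skew (emb m) a]
    exact ((ha m (mmp_le_nilp hm)).negShiftEval hD).neg
  refine ⟨fun nn hnn v hv i => claim1 nn hnn v hv i, ?_⟩
  intro Inv hInv
  have hInv' : ∀ a, Inv a ↔ ∀ nn ∈ nilp g h, PJ J (br (emb nn) a) := hInv
  have invTrans : ∀ a b, Inv a → a - b ∈ J → Inv b := by
    intro a b ha hab
    rw [hInv'] at ha ⊢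
    intro nn hnn i
    have hrw : br (emb nn) b = br (emb nn) a - br (emb nn) (a - b) := by
      rw [← hPVA.br_sub_right, sub_sub_cancel]
    rw [hrw, Polynomial.coeff_sub]
    exact J.sub_mem (ha nn hnn i) (claim1 nn hnn _ hab i)
  refine ⟨invTrans, ⟨?_, ?_, ?_⟩, ?_, ?_⟩
  · rw [hInv']
    intro nn hnn i
    rw [hPVA.br_one_right]
    simp
  · intro a b ha hb
    rw [hInv'] at ha hb ⊢
    intro nn hnn
    rw [hPVA.leibniz]
    exact ((hb nn hnn).mulRight _).add ((ha nn hnn).mulLeft _)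
  · intro a b ha hb
    rw [hInv'] at ha hb ⊢
    intro nn hnn
    rw [hPVA.add_right]
    exact (ha nn hnn).add (hb nn hnn)
  · intro a b ha hb i
    rw [hInv'] at ha hb
    rw [hInv' ((br a b).coeff i)]
    intro nn hnn
    have hbra : ∀ v ∈ J, PJ J (br a v) := claimC a ha
    have hbrb : ∀ v ∈ J, PJ J (br b v) := claimC b hb
    have hjac := hPVA.jacobi (emb nn) a b
    have hL : ∀ i' : ℕ,
        ((br a b).sum fun n x => Polynomial.C (br (emb nn) x) * Polynomial.X ^ n).coeff i'
          = br (emb nn) ((br a b).coeff i') :=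
      fun i' => sum_C_mul_X_pow_coeff _ _ (hPVA.br_zero_right _) i'
    have hQ1 : QJ J ((br (emb nn) b).sum fun m x => (br a x).sum fun n y =>
        (Polynomial.X : Polynomial (Polynomial V)) ^ n *
          Polynomial.C ((Polynomial.X : Polynomial V) ^ m * Polynomial.C y)) := by
      refine QJ.polySum _ _ fun m _ => ?_
      have hy : PJ J (br a ((br (emb nn) b).coeff m)) := hbra _ (hb nn hnn m)
      refine QJ.polySum _ _ fun n _ => ?_
      exact (QJ.CP ((PJ.C (hy n)).mulRight _)).mulRight _
    have hQ2 : QJ J ((br (emb nn) a).sum fun n x =>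
        lamPP ^ n * evalAtPP (br x b) (lamPP + muPP)) := by
      refine QJ.polySum _ _ fun n _ => ?_
      have hx : (br (emb nn) a).coeff n ∈ J := ha nn hnn n
      have hxb : PJ J (br ((br (emb nn) a).coeff n) b) := by
        rw [hPVA.skew b _]
        exact ((hbrb _ hx).negShiftEval hD).neg
      refine QJ.mulRight ?_ _
      show QJ J ((br ((br (emb nn) a).coeff n) b).sum fun m c =>
        embPP c * (lamPP + muPP) ^ m)
      exact QJ.polySum _ _ fun m _ => (QJ.embPP (hxb m)).mulLeft _
    intro j
    have hmem : ((((br a b).sum fun n x =>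
        Polynomial.C (br (emb nn) x) * Polynomial.X ^ n)).coeff i).coeff j ∈ J := by
      rw [hjac]
      exact (hQ1.add hQ2) i j
    rwa [hL i] at hmem
  · intro a a' b b' ha hb haa hbb i
    have hb' : Inv b' := invTrans b b' hb hbb
    rw [hInv'] at ha hb hb'
    have h1 : PJ J (br a (b - b')) := claimC a ha _ hbb
    have h2 : PJ J (br (a - a') b') := by
      rw [hPVA.skew b' _]
      exact ((claimC b' hb' _ haa).negShiftEval hD).neg
    have e : br a b - br a' b' = br a (b - b') + br (a - a') b' := by
      rw [hPVA.br_sub_right, hPVA.br_sub_left]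
      ring
    have hmem : ((br a b - br a' b').coeff i) ∈ J := by
      rw [e, Polynomial.coeff_add]
      exact J.add_mem (h1 i) (h2 i)
    rwa [Polynomial.coeff_sub] at hmem

end Stmt1
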